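/- Let f_k(n,h) be defined by the recursion f_k(n,h) = ∑_{i=1}^{m} f_{k-1}(n_i, h_{i-1}) + C·n·λ_k(h), where h_i = λ_{k-1}(h_{i-1}), h_0 = h, m = λ_k(h), the n_i satisfy ∑_{j≤i} n_j ≤ n/2^(h_i + 1), and f_1(n,h) ≤ c·n·λ_1(h). Then there exist constants c_1, c_2 (independent of k) such that f_k(n,h) ≤ c_1·n + c_2·n·λ_k(h) for all k ≥ 1; in particular f_k(n,h) = O(n·λ_k(h)) uniformly in k. -/

import Mathlib

open scoped BigOperators

/-- The modified Ackermann function: `A 0 n = 2^n`, `A (m+1) 0 = A m 1`,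
`A (m+1) (n+1) = A m (A (m+1) n)`. -/
def A : ℕ → ℕ → ℕ
  | 0, n => 2 ^ n
  | m + 1, 0 => A m 1
  | m + 1, n + 1 => A m (A (m + 1) n)

/-- Row inverse of the Ackermann function: `λ_k(n) = min {j ≥ 1 : A k j ≥ n}`. -/
noncomputable def lam (k n : ℕ) : ℕ := sInf {j : ℕ | 1 ≤ j ∧ n ≤ A k j}

/-- Theorem 2 of the paper: if `f 1 n h ≤ c·n·λ_1(h)` and for `k ≥ 2` the cost
satisfies the recursion `f k n h = ∑_{i=1}^{m} f (k-1) (n_i) (h_{i-1}) + C·n·λ_k(h)`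
with `m = λ_k(h)`, `h_i = λ_{k-1}^{(i)}(h)` and prefix constraints
`n_1 + … + n_i ≤ n / 2^(h_i + 1)`, then there are constants `c₁, c₂` independent of
`k` with `f k n h ≤ c₁·n + c₂·n·λ_k(h)` for all `k ≥ 1`, i.e. `f_k(n,h) = O(n·λ_k(h))`
uniformly in `k`. -/
lemma lt_A : ∀ m n, n < A m n
  | 0, n => by simpa [A] using Nat.lt_two_pow_self (n := n)
  | m + 1, 0 => by
    have := lt_A m 1
    simp only [A]; omega
  | m + 1, n + 1 => by
    have h1 := lt_A (m + 1) n
    have h2 := lt_A m (A (m + 1) n)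
    rw [A]; omega

lemma lam_pos (k n : ℕ) : 1 ≤ lam k n := by
  have hne : {j : ℕ | 1 ≤ j ∧ n ≤ A k j}.Nonempty := by
    refine ⟨n + 1, by omega, ?_⟩
    have := lt_A k (n + 1); omega
  exact (Nat.sInf_mem hne).1

lemma four_mul_le (t : ℕ) (ht : 1 ≤ t) : 4 * t ≤ 2 ^ (t + 1) := by
  induction t with
  | zero => omega
  | succ t ih =>
    rcases Nat.eq_or_lt_of_le ht with h | h
    · simp [← h]
    · have := ih (by omega)
      rw [pow_succ]
      omega

theorem stmt_15 (f : ℕ → ℝ → ℕ → ℝ) (c C : ℝ) (hc : 0 ≤ c) (hC : 0 ≤ C)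
    (hbase : ∀ (n : ℝ), 0 ≤ n → ∀ h : ℕ, f 1 n h ≤ c * n * lam 1 h)
    (hrec : ∀ k : ℕ, 2 ≤ k → ∀ (n : ℝ), 0 ≤ n → ∀ h : ℕ, ∃ a : ℕ → ℝ,
      (∀ i, 0 ≤ a i) ∧
      (∀ i < lam k h,
        (∑ j ∈ Finset.range (i + 1), a j) ≤ n / 2 ^ ((lam (k - 1))^[i + 1] h + 1)) ∧
      f k n h =
        (∑ i ∈ Finset.range (lam k h), f (k - 1) (a i) ((lam (k - 1))^[i] h)) +
          C * n * lam k h) :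
    ∃ c₁ c₂ : ℝ, ∀ k : ℕ, 1 ≤ k → ∀ (n : ℝ), 0 ≤ n → ∀ h : ℕ,
      f k n h ≤ c₁ * n + c₂ * n * lam k h := by
  have hc2 : (0:ℝ) ≤ c + 2 * C := by linarith
  refine ⟨0, c + 2 * C, ?_⟩
  intro k hk
  induction k, hk using Nat.le_induction with
  | base =>
    intro n hn h
    have hb := hbase n hn h
    have h1 : (0:ℝ) ≤ (lam 1 h : ℝ) := Nat.cast_nonneg _
    nlinarith [mul_nonneg (mul_nonneg hC hn) h1]
  | succ k hk ih =>
    intro n hn h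
    obtain ⟨a, ha0, hpre, heq⟩ := hrec (k + 1) (by omega) n hn h
    simp only [Nat.add_sub_cancel] at heq hpre
    rw [heq]
    set m := lam (k + 1) h with hm
    have key : ∀ i ∈ Finset.range m,
        f k (a i) ((lam k)^[i] h) ≤ (c + 2 * C) * n / 4 := by
      intro i hi
      have hi' := Finset.mem_range.mp hi
      have hai : a i ≤ n / 2 ^ ((lam k)^[i + 1] h + 1) := by
        have h1 := hpre i hi'
        have h2 : a i ≤ ∑ j ∈ Finset.range (i + 1), a j :=
          Finset.single_le_sum (fun j _ => ha0 j) (Finset.self_mem_range_succ i)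
        linarith
      have hb := ih (a i) (ha0 i) ((lam k)^[i] h)
      set t := (lam k)^[i + 1] h with ht
      have htlam : lam k ((lam k)^[i] h) = t := by
        rw [ht, Function.iterate_succ_apply']
      rw [htlam] at hb
      have ht1 : 1 ≤ t := by
        rw [ht, Function.iterate_succ_apply']; exact lam_pos k _
      have hP : (0:ℝ) < 2 ^ (t + 1) := by positivity
      have h4 : (4:ℝ) * t ≤ 2 ^ (t + 1) := by
        have := four_mul_le t ht1
        calc (4:ℝ) * t = ((4 * t : ℕ) : ℝ) := by push_cast; ring
          _ ≤ ((2 ^ (t + 1) : ℕ) : ℝ) := by exact_mod_cast this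
          _ = 2 ^ (t + 1) := by push_cast; ring
      have hnt : a i * (t : ℝ) ≤ n / 4 := by
        have hstep : a i * (t : ℝ) ≤ (n / 2 ^ (t + 1)) * t :=
          mul_le_mul_of_nonneg_right hai (Nat.cast_nonneg t)
        have h2 : (n / 2 ^ (t + 1)) * (t : ℝ) ≤ n / 4 := by
          rw [div_mul_eq_mul_div, div_le_div_iff₀ hP (by norm_num : (0:ℝ) < 4)]
          nlinarith [mul_le_mul_of_nonneg_left h4 hn]
        linarith
      calc f k (a i) ((lam k)^[i] h) ≤ 0 * a i + (c + 2 * C) * a i * t := hb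
        _ = (c + 2 * C) * (a i * t) := by ring
        _ ≤ (c + 2 * C) * (n / 4) := mul_le_mul_of_nonneg_left hnt hc2
        _ = (c + 2 * C) * n / 4 := by ring
    have hsum : (∑ i ∈ Finset.range m, f k (a i) ((lam k)^[i] h)) ≤
        (m : ℝ) * ((c + 2 * C) * n / 4) := by
      calc _ ≤ ∑ _i ∈ Finset.range m, (c + 2 * C) * n / 4 :=
            Finset.sum_le_sum key
        _ = (m : ℝ) * ((c + 2 * C) * n / 4) := by
            simp [Finset.sum_const, Finset.card_range, nsmul_eq_mul]
    have hnm : (0:ℝ) ≤ n * m := mul_nonneg hn (Nat.cast_nonneg m)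
    nlinarith [mul_nonneg hnm hc, mul_nonneg hnm hC]
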